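/- arXiv:1712.06033 — 3 statements merged into one kernel-verified Lean document; each statement's English description precedes it below -/
import Mathlib

section
/- Let h : Q → P be a contraction morphism of positive opetopes and p ∈ P_k. Then the set of non-degenerating k-faces in the fiber over p, namely h^{-1}(p) − ker(h), is a <^+-interval in Q_k. -/
open scoped Classical

structure PHg where
  Face : ℕ → Type
  fin : ∀ k, Finite (Face k)
  γ : ∀ k, Face (k+1) → Face k
  δ : ∀ k, Face (k+1) → Face k → Prop
  δ_total : ∀ k a, ∃ x, δ k a x
  δ0_fun : ∀ (a : Face 1) (x y : Face 0), δ 0 a x → δ 0 a y → x = y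
  bounded : ∃ n, ∀ k, n < k → IsEmpty (Face k)

abbrev PHg.FaceS (S : PHg) : Type := Σ k, S.Face k

/-- The codomain operation, viewed on faces of arbitrary dimension
(identity in dimension 0). -/
def gammaS (S : PHg) : S.FaceS → S.FaceS
  | ⟨0, x⟩ => ⟨0, x⟩
  | ⟨k+1, x⟩ => ⟨k, S.γ k x⟩

/-- `x ∈ δ(q)`. -/
def inDelta (S : PHg) (x q : S.FaceS) : Prop :=
  match q with
  | ⟨0, _⟩ => False
  | ⟨k+1, a⟩ => ∃ h : x.1 = k, S.δ k a (h ▸ x.2)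

/-- `x = γ(q)` (for `q` of positive dimension). -/
def inGammaS (S : PHg) (x q : S.FaceS) : Prop := 0 < q.1 ∧ gammaS S q = x

/-- `x ∈ ∂(q) = {γ(q)} ∪ δ(q)`. -/
def inBoundary (S : PHg) (x q : S.FaceS) : Prop := inGammaS S x q ∨ inDelta S x q

def covPlus (S : PHg) (a b : S.FaceS) : Prop :=
  ∃ α, inDelta S a α ∧ gammaS S α = b

/-- The upper order `<⁺`. -/
def ltPlus (S : PHg) : S.FaceS → S.FaceS → Prop := Relation.TransGen (covPlus S)

def lePlus (S : PHg) (a b : S.FaceS) : Prop := a = b ∨ ltPlus S a b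

def perpPlus (S : PHg) (a b : S.FaceS) : Prop := ltPlus S a b ∨ ltPlus S b a

def covMinus (S : PHg) (a b : S.FaceS) : Prop := 0 < a.1 ∧ inDelta S (gammaS S a) b

/-- The lower order `<⁻`. -/
def ltMinus (S : PHg) : S.FaceS → S.FaceS → Prop := Relation.TransGen (covMinus S)

def perpMinus (S : PHg) (a b : S.FaceS) : Prop := ltMinus S a b ∨ ltMinus S b a

/-- Iterated codomain `γ^{(k)}`. -/
def gammaIter (S : PHg) (k : ℕ) (p : S.FaceS) : S.FaceS := (gammaS S)^[p.1 - k] p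

/-- `X` is a `<⁺`-interval. -/
def IntervalPlus (S : PHg) (X : Set S.FaceS) : Prop :=
  X = ∅ ∨ ∃ x0 x1, lePlus S x0 x1 ∧ X = {x | lePlus S x0 x ∧ lePlus S x x1}

def hasDim (S : PHg) (n : ℕ) : Prop :=
  Nonempty (S.Face n) ∧ ∀ k, n < k → IsEmpty (S.Face k)

/-- A positive opetope: a nonempty positive hypergraph satisfying globularity,
strictness, disjointness, pencil linearity, and having at most one face outside
`δ(S_{k+1})` in each dimension. -/
structure IsOpetope (S : PHg) : Prop where
  ne : Nonempty (S.Face 0)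
  glob_gamma : ∀ a : S.FaceS, 2 ≤ a.1 →
    ({gammaS S (gammaS S a)} : Set S.FaceS) =
      {x | ∃ y, inDelta S y a ∧ gammaS S y = x} \ {x | ∃ y, inDelta S y a ∧ inDelta S x y}
  glob_delta : ∀ a : S.FaceS, 2 ≤ a.1 →
    {x | inDelta S x (gammaS S a)} =
      {x | ∃ y, inDelta S y a ∧ inDelta S x y} \ {x | ∃ y, inDelta S y a ∧ gammaS S y = x}
  strict : ∀ a, ¬ ltPlus S a a
  linear0 : ∀ a b : S.FaceS, a.1 = 0 → b.1 = 0 → a = b ∨ perpPlus S a b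
  disj : ∀ a b : S.FaceS, 0 < a.1 → ¬ (perpMinus S a b ∧ perpPlus S a b)
  pencil_gamma : ∀ x a b, inGammaS S x a → inGammaS S x b → a = b ∨ perpPlus S a b
  pencil_delta : ∀ x a b, inDelta S x a → inDelta S x b → a = b ∨ perpPlus S a b
  size_le_one : ∀ k (a b : S.Face k),
    (¬ ∃ α : S.Face (k+1), S.δ k α a) → (¬ ∃ α : S.Face (k+1), S.δ k α b) → a = b
/-- A contraction morphism (`ι`-map) of positive opetopes. -/
structure IotaMap (Q P : PHg) where
  f : Q.FaceS → P.FaceS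
  dim_le : ∀ q, (f q).1 ≤ q.1
  gamma_pres : ∀ (k : ℕ) (q : Q.FaceS), f (gammaIter Q k q) = gammaIter P k (f q)
  dom_eq : ∀ q : Q.FaceS, 0 < q.1 → (f q).1 = q.1 →
      (∀ x, inDelta Q x q → (f x).1 = x.1 → inDelta P (f x) (f q)) ∧
      (∀ x y, inDelta Q x q → (f x).1 = x.1 → inDelta Q y q → (f y).1 = y.1 →
        f x = f y → x = y) ∧
      (∀ z, inDelta P z (f q) → ∃ x, inDelta Q x q ∧ (f x).1 = x.1 ∧ f x = z)
  dom_one : ∀ q : Q.FaceS, (f q).1 + 1 = q.1 →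
      (∀ x, inDelta Q x q → (f x).1 = x.1 → f x = f q) ∧
      (∃! x, inDelta Q x q ∧ (f x).1 = x.1)
  dom_more : ∀ q : Q.FaceS, (f q).1 + 2 ≤ q.1 → ∀ x, inDelta Q x q → (f x).1 < x.1

section Basic

variable {S : PHg}

lemma inDelta_dim {x q : S.FaceS} (h : inDelta S x q) : x.1 + 1 = q.1 := by
  obtain ⟨n, a⟩ := q
  cases n with
  | zero => exact absurd h (by simp [inDelta])
  | succ m => obtain ⟨hx, _⟩ := h; simp [hx]

lemma inDelta_mk {k : ℕ} {a : S.Face (k+1)} {b : S.Face k} (h : S.δ k a b) :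
    inDelta S ⟨k, b⟩ ⟨k+1, a⟩ := ⟨rfl, h⟩

lemma gammaS_dim {q : S.FaceS} (h : 0 < q.1) : (gammaS S q).1 + 1 = q.1 := by
  obtain ⟨n, a⟩ := q
  cases n with
  | zero => simp at h
  | succ m => rfl

lemma covPlus_dim {a b : S.FaceS} (h : covPlus S a b) : a.1 = b.1 := by
  obtain ⟨α, hδ, hγ⟩ := h
  have h1 := inDelta_dim hδ
  have h2 : 0 < α.1 := by omega
  have h3 := gammaS_dim h2
  rw [hγ] at h3
  omega

lemma ltPlus_dim {a b : S.FaceS} (h : ltPlus S a b) : a.1 = b.1 := by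
  induction h with
  | single h => exact covPlus_dim h
  | tail _ h ih => exact ih.trans (covPlus_dim h)

lemma covMinus_dim {a b : S.FaceS} (h : covMinus S a b) : a.1 = b.1 := by
  obtain ⟨hpos, hδ⟩ := h
  have h1 := inDelta_dim hδ
  have h2 := gammaS_dim hpos
  omega

lemma ltPlus_trans {a b c : S.FaceS} (h1 : ltPlus S a b) (h2 : ltPlus S b c) :
    ltPlus S a c := Relation.TransGen.trans h1 h2

lemma lePlus_refl (a : S.FaceS) : lePlus S a a := Or.inl rfl

lemma lePlus_trans {a b c : S.FaceS} (h1 : lePlus S a b) (h2 : lePlus S b c) :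
    lePlus S a c := by
  rcases h1 with rfl | h1
  · exact h2
  · rcases h2 with rfl | h2
    · exact Or.inr h1
    · exact Or.inr (ltPlus_trans h1 h2)

lemma lePlus_trans_lt {a b c : S.FaceS} (h1 : lePlus S a b) (h2 : ltPlus S b c) :
    ltPlus S a c := by
  rcases h1 with rfl | h1
  · exact h2
  · exact ltPlus_trans h1 h2

lemma ltPlus_trans_le {a b c : S.FaceS} (h1 : ltPlus S a b) (h2 : lePlus S b c) :
    ltPlus S a c := by
  rcases h2 with rfl | h2
  · exact h1
  · exact ltPlus_trans h1 h2

lemma perpPlus_symm {a b : S.FaceS} (h : perpPlus S a b) : perpPlus S b a := h.symm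

lemma lePlus_antisymm (hS : IsOpetope S) {a b : S.FaceS}
    (h1 : lePlus S a b) (h2 : lePlus S b a) : a = b := by
  rcases h1 with rfl | h1
  · rfl
  · rcases h2 with rfl | h2
    · rfl
    · exact absurd (ltPlus_trans h1 h2) (hS.strict a)

lemma faceS_finite (S : PHg) : Finite S.FaceS := by
  obtain ⟨n, hn⟩ := S.bounded
  have hle : ∀ q : S.FaceS, q.1 < n + 1 := by
    intro q
    by_contra hq
    exact (hn q.1 (by omega)).false q.2
  have : ∀ k, Finite (S.Face k) := S.fin
  refine Finite.of_injective (fun q : S.FaceS => (⟨⟨q.1, hle q⟩, q.2⟩ : Σ k : Fin (n+1), S.Face k)) ?_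
  rintro ⟨i, x⟩ ⟨j, y⟩ hxy
  obtain ⟨hfst, hsnd⟩ := Sigma.ext_iff.mp hxy
  have hij : i = j := by simpa using congrArg Fin.val hfst
  subst hij
  have hxy2 : x = y := eq_of_heq hsnd
  subst hxy2
  rfl

lemma wf_gtPlus (hS : IsOpetope S) : WellFounded (fun a b : S.FaceS => ltPlus S b a) := by
  have : Finite S.FaceS := faceS_finite S
  have htr : IsTrans S.FaceS (fun a b : S.FaceS => ltPlus S b a) :=
    ⟨fun a b c h1 h2 => ltPlus_trans h2 h1⟩
  have hirr : IsIrrefl S.FaceS (fun a b : S.FaceS => ltPlus S b a) := ⟨fun a => hS.strict a⟩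
  exact Finite.wellFounded_of_trans_of_irrefl _

lemma wf_ltPlus (hS : IsOpetope S) : WellFounded (ltPlus S) := by
  have : Finite S.FaceS := faceS_finite S
  have htr : IsTrans S.FaceS (ltPlus S) := ⟨fun a b c h1 h2 => ltPlus_trans h1 h2⟩
  have hirr : IsIrrefl S.FaceS (ltPlus S) := ⟨fun a => hS.strict a⟩
  exact Finite.wellFounded_of_trans_of_irrefl _

end Basic
section Opetope

variable {S : PHg}

/-- Every codomain of a face of `δ α` is `≤⁺ γγα`. -/
lemma le_gamma_gamma (hS : IsOpetope S) {α : S.FaceS} (hα : 2 ≤ α.1) :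
    ∀ x : S.FaceS, (∃ y, inDelta S y α ∧ gammaS S y = x) →
      lePlus S x (gammaS S (gammaS S α)) := by
  have hwf := wf_gtPlus hS
  intro x
  induction x using WellFounded.induction hwf with
  | _ x IH =>
    rintro ⟨y, hy, hxy⟩
    by_cases hB : ∃ y', inDelta S y' α ∧ inDelta S x y'
    · obtain ⟨y', hy', hxy'⟩ := hB
      have hcov : covPlus S x (gammaS S y') := ⟨y', hxy', rfl⟩
      have hlt : ltPlus S x (gammaS S y') := Relation.TransGen.single hcov
      have hrec := IH (gammaS S y') hlt ⟨y', hy', rfl⟩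
      exact lePlus_trans (Or.inr hlt) hrec
    · have hglob := hS.glob_gamma α hα
      have hmem : x ∈ ({x | ∃ y, inDelta S y α ∧ gammaS S y = x} \
          {x | ∃ y, inDelta S y α ∧ inDelta S x y} : Set S.FaceS) := ⟨⟨y, hy, hxy⟩, hB⟩
      rw [← hglob] at hmem
      exact Or.inl (Set.mem_singleton_iff.mp hmem)

/-- Lemma G : covers are `γ`-monotone. -/
lemma gamma_mono_cov (hS : IsOpetope S) {a b : S.FaceS} (hpos : 0 < a.1)
    (h : covPlus S a b) : lePlus S (gammaS S a) (gammaS S b) := by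
  obtain ⟨α, hδ, hγ⟩ := h
  have hdim := inDelta_dim hδ
  have hα : 2 ≤ α.1 := by omega
  have := le_gamma_gamma hS hα (gammaS S a) ⟨a, hδ, rfl⟩
  rwa [hγ] at this

/-- Lemma G' : `<⁺` is `γ`-monotone. -/
lemma gamma_mono (hS : IsOpetope S) {a b : S.FaceS} (hpos : 0 < a.1)
    (h : ltPlus S a b) : lePlus S (gammaS S a) (gammaS S b) := by
  induction h with
  | single h => exact gamma_mono_cov hS hpos h
  | tail hab h ih =>
    have hb : 0 < _ := (ltPlus_dim hab) ▸ hpos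
    exact lePlus_trans ih (gamma_mono_cov hS hb h)

/-- Claim U : `<⁺`-upsets are linearly preordered. -/
lemma upset_linear (hS : IsOpetope S) :
    ∀ y a b : S.FaceS, ltPlus S y a → ltPlus S y b → a = b ∨ perpPlus S a b := by
  have hwf := wf_gtPlus hS
  intro y
  induction y using WellFounded.induction hwf with
  | _ y IH =>
    intro a b hya hyb
    obtain ⟨u, hu, hua⟩ := Relation.TransGen.head'_iff.mp hya
    obtain ⟨v, hv, hvb⟩ := Relation.TransGen.head'_iff.mp hyb
    have hua' : lePlus S u a := by
      rcases Relation.reflTransGen_iff_eq_or_transGen.mp hua with heq | hlt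
      · exact Or.inl heq.symm
      · exact Or.inr hlt
    have hvb' : lePlus S v b := by
      rcases Relation.reflTransGen_iff_eq_or_transGen.mp hvb with heq | hlt
      · exact Or.inl heq.symm
      · exact Or.inr hlt
    have key : ∀ w : S.FaceS, covPlus S y w → lePlus S w a → lePlus S w b →
        a = b ∨ perpPlus S a b := by
      intro w hyw hwa hwb
      rcases hwa with rfl | hwa
      · rcases hwb with rfl | hwb
        · exact Or.inl rfl
        · exact Or.inr (Or.inl hwb)
      · rcases hwb with rfl | hwb
        · exact Or.inr (Or.inr hwa)
        · exact IH w (Relation.TransGen.single hyw) a b hwa hwb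
    obtain ⟨αu, hαu, hγu⟩ := hu
    obtain ⟨αv, hαv, hγv⟩ := hv
    have hposα : 0 < αu.1 := by
      have := inDelta_dim hαu; omega
    have hcmp : u = v ∨ ltPlus S u v ∨ ltPlus S v u := by
      rcases hS.pencil_delta y αu αv hαu hαv with heq | hperp
      · subst heq; rw [← hγu, ← hγv]
        exact Or.inl rfl
      · rcases hperp with hlt | hlt
        · have := gamma_mono hS hposα hlt
          rw [hγu, hγv] at this
          rcases this with heq | hlt'
          · exact Or.inl heq
          · exact Or.inr (Or.inl hlt')
        · have hposα' : 0 < αv.1 := by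
            have := inDelta_dim hαv; omega
          have := gamma_mono hS hposα' hlt
          rw [hγu, hγv] at this
          rcases this with heq | hlt'
          · exact Or.inl heq.symm
          · exact Or.inr (Or.inr hlt')
    rcases hcmp with rfl | huv | hvu
    · exact key u ⟨αu, hαu, hγu⟩ hua' hvb'
    · exact key u ⟨αu, hαu, hγu⟩ hua' (lePlus_trans (Or.inr huv) hvb')
    · exact key v ⟨αv, hαv, hγv⟩ (lePlus_trans (Or.inr hvu) hua') hvb'

end Opetope
section Mix

variable {S : PHg}

/-- MIX : a single `⋖⁻` followed by a single `⋖⁺`. -/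
lemma mix (hS : IsOpetope S) {a c b : S.FaceS} (hac : covMinus S a c)
    (hcb : covPlus S c b) : covMinus S a b ∨ a = b ∨ perpPlus S a b := by
  obtain ⟨hposa, hδ⟩ := hac
  obtain ⟨α, hcα, hγα⟩ := hcb
  have hdimc : c.1 = a.1 := (covMinus_dim ⟨hposa, hδ⟩).symm
  have hdimα : c.1 + 1 = α.1 := inDelta_dim hcα
  have hα2 : 2 ≤ α.1 := by omega
  by_cases hA : ∃ y, inDelta S y α ∧ gammaS S y = gammaS S a
  · obtain ⟨y0, hy0, hγy0⟩ := hA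
    have hposy0 : 0 < y0.1 := by
      have := inDelta_dim hy0; omega
    rcases hS.pencil_gamma (gammaS S a) a y0 ⟨hposa, rfl⟩ ⟨hposy0, hγy0⟩ with rfl | hperp
    · exact Or.inr (Or.inr (Or.inl (Relation.TransGen.single ⟨α, hy0, hγα⟩)))
    · have hy0b : ltPlus S y0 b := Relation.TransGen.single ⟨α, hy0, hγα⟩
      rcases hperp with h1 | h2
      · exact Or.inr (Or.inr (Or.inl (ltPlus_trans h1 hy0b)))
      · rcases upset_linear hS y0 a b h2 hy0b with heq | hperp'
        · exact Or.inr (Or.inl heq)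
        · exact Or.inr (Or.inr hperp')
  · have hglob := hS.glob_delta α hα2
    have hmem : gammaS S a ∈ ({x | ∃ y, inDelta S y α ∧ inDelta S x y} \
        {x | ∃ y, inDelta S y α ∧ gammaS S y = x} : Set S.FaceS) := ⟨⟨c, hcα, hδ⟩, hA⟩
    have hmem2 : inDelta S (gammaS S a) (gammaS S α) :=
      (Set.ext_iff.mp hglob (gammaS S a)).mpr hmem
    rw [hγα] at hmem2
    exact Or.inl ⟨hposa, hmem2⟩

/-- MIX* : a single `⋖⁻` followed by `<⁺`. -/
lemma mix_star (hS : IsOpetope S) {c b : S.FaceS} (hcb : ltPlus S c b) :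
    ∀ a, covMinus S a c → covMinus S a b ∨ a = b ∨ perpPlus S a b := by
  induction hcb using Relation.TransGen.head_induction_on with
  | single h => exact fun a hac => mix hS hac h
  | head h' hdb IH =>
    intro a hac
    rcases mix hS hac h' with had | rfl | hperp
    · exact IH a had
    · exact Or.inr (Or.inr (Or.inl hdb))
    · rcases hperp with h1 | h2
      · exact Or.inr (Or.inr (Or.inl (ltPlus_trans h1 hdb)))
      · rcases upset_linear hS _ a b h2 hdb with heq | hperp'
        · exact Or.inr (Or.inl heq)
        · exact Or.inr (Or.inr hperp')

end Mix
section Map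

variable {Q P : PHg} (h : IotaMap Q P)

lemma gammaIter_self {S : PHg} {q : S.FaceS} {m : ℕ} (hm : q.1 ≤ m) :
    gammaIter S m q = q := by
  unfold gammaIter
  rw [Nat.sub_eq_zero_of_le hm]
  rfl

lemma gammaIter_one {S : PHg} {q : S.FaceS} {m : ℕ} (hm : q.1 = m + 1) :
    gammaIter S m q = gammaS S q := by
  unfold gammaIter
  have h1 : q.1 - m = 1 := by omega
  rw [h1, Function.iterate_one]

lemma F_gamma {q : Q.FaceS} (hpos : 0 < q.1) (hnd : (h.f q).1 = q.1) :
    h.f (gammaS Q q) = gammaS P (h.f q) := by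
  have hgp := h.gamma_pres (q.1 - 1) q
  rw [gammaIter_one (by omega), gammaIter_one (by omega)] at hgp
  exact hgp

lemma F_gamma_drop1 {q : Q.FaceS} (hd : (h.f q).1 + 1 = q.1) :
    h.f (gammaS Q q) = h.f q := by
  have hgp := h.gamma_pres ((h.f q).1) q
  rw [gammaIter_one (by omega), gammaIter_self (le_refl _)] at hgp
  exact hgp

/-- Lemma C : non-degeneracy propagates up along covers, monotonically. -/
lemma cov_nondeg {a b : Q.FaceS} (hcov : covPlus Q a b) (hnd : (h.f a).1 = a.1) :
    (h.f b).1 = b.1 ∧ lePlus P (h.f a) (h.f b) := by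
  obtain ⟨α, hδ, hγ⟩ := hcov
  subst hγ
  have hdα : a.1 + 1 = α.1 := inDelta_dim hδ
  have hdb : (gammaS Q α).1 + 1 = α.1 := gammaS_dim (by omega)
  have hble := h.dim_le α
  rcases (by omega : (h.f α).1 = α.1 ∨ (h.f α).1 + 1 = α.1 ∨ (h.f α).1 + 2 ≤ α.1)
    with heq | hd1 | hd2
  · obtain ⟨cl1, -, -⟩ := h.dom_eq α (by omega) heq
    have hfa : inDelta P (h.f a) (h.f α) := cl1 a hδ hnd
    have hfb : h.f (gammaS Q α) = gammaS P (h.f α) := F_gamma h (by omega) heq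
    have hdim : (h.f (gammaS Q α)).1 = (gammaS Q α).1 := by
      rw [hfb]
      have := gammaS_dim (q := h.f α) (by omega)
      omega
    exact ⟨hdim, Or.inr (Relation.TransGen.single ⟨h.f α, hfa, hfb.symm⟩)⟩
  · obtain ⟨cl1, -⟩ := h.dom_one α hd1
    have hfa : h.f a = h.f α := cl1 a hδ hnd
    have hfb : h.f (gammaS Q α) = h.f α := F_gamma_drop1 h hd1
    refine ⟨by rw [hfb]; omega, Or.inl (hfa.trans hfb.symm)⟩
  · exact absurd (h.dom_more α hd2 a hδ) (by omega)

lemma lt_nondeg {a b : Q.FaceS} (hab : ltPlus Q a b) (hnd : (h.f a).1 = a.1) :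
    (h.f b).1 = b.1 ∧ lePlus P (h.f a) (h.f b) := by
  induction hab with
  | single hcov => exact cov_nondeg h hcov hnd
  | tail _ hcov ih =>
    obtain ⟨ih1, ih2⟩ := ih
    obtain ⟨j1, j2⟩ := cov_nondeg h hcov ih1
    exact ⟨j1, lePlus_trans ih2 j2⟩

/-- Step lemma for `⋖⁻`-chains. -/
lemma stepMinus {r r' : Q.FaceS}
    (hnd : (h.f (gammaS Q r)).1 = (gammaS Q r).1) (hcov : covMinus Q r r') :
    (h.f (gammaS Q r')).1 = (gammaS Q r').1 ∧
      lePlus P (h.f (gammaS Q r)) (h.f (gammaS Q r')) := by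
  obtain ⟨hpos, hδ⟩ := hcov
  have hdr : r'.1 = r.1 := (covMinus_dim ⟨hpos, hδ⟩).symm
  have hdγ : (gammaS Q r).1 + 1 = r.1 := gammaS_dim hpos
  have hdγ' : (gammaS Q r').1 + 1 = r'.1 := gammaS_dim (by omega)
  have hble := h.dim_le r'
  rcases (by omega : (h.f r').1 = r'.1 ∨ (h.f r').1 + 1 = r'.1 ∨ (h.f r').1 + 2 ≤ r'.1)
    with heq | hd1 | hd2
  · obtain ⟨cl1, -, -⟩ := h.dom_eq r' (by omega) heq
    have hfa : inDelta P (h.f (gammaS Q r)) (h.f r') := cl1 _ hδ hnd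
    have hfb : h.f (gammaS Q r') = gammaS P (h.f r') := F_gamma h (by omega) heq
    have hdim : (h.f (gammaS Q r')).1 = (gammaS Q r').1 := by
      rw [hfb]
      have := gammaS_dim (q := h.f r') (by omega)
      omega
    exact ⟨hdim, Or.inr (Relation.TransGen.single ⟨h.f r', hfa, hfb.symm⟩)⟩
  · obtain ⟨cl1, -⟩ := h.dom_one r' hd1
    have hfa : h.f (gammaS Q r) = h.f r' := cl1 _ hδ hnd
    have hfb : h.f (gammaS Q r') = h.f r' := F_gamma_drop1 h hd1
    refine ⟨by rw [hfb]; omega, Or.inl (hfa.trans hfb.symm)⟩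
  · exact absurd (h.dom_more r' hd2 _ hδ) (by omega)

/-- No `<⁻` between non-degenerating faces of the same fiber. -/
lemma fiber_no_ltMinus (hP : IsOpetope P) {p : P.FaceS} {q1 q2 : Q.FaceS}
    (h1 : h.f q1 = p ∧ (h.f q1).1 = q1.1) (h2 : h.f q2 = p ∧ (h.f q2).1 = q2.1) :
    ¬ ltMinus Q q1 q2 := by
  intro hlt
  have hpos1 : 0 < q1.1 := by
    obtain ⟨r, hr, -⟩ := Relation.TransGen.head'_iff.mp hlt
    exact hr.1
  have hγ1 : h.f (gammaS Q q1) = gammaS P p := by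
    rw [F_gamma h hpos1 h1.2, h1.1]
  have hpp : 0 < p.1 := by
    have := h1.2; rw [h1.1] at this; omega
  have hγp : (gammaS P p).1 + 1 = p.1 := gammaS_dim hpp
  have hnd1 : (h.f (gammaS Q q1)).1 = (gammaS Q q1).1 := by
    rw [hγ1]
    have := gammaS_dim hpos1
    have := h1.2; rw [h1.1] at this
    omega
  obtain ⟨r, hq1r, hrq2⟩ := Relation.TransGen.tail'_iff.mp hlt
  have hΨ : (h.f (gammaS Q r)).1 = (gammaS Q r).1 ∧
      lePlus P (gammaS P p) (h.f (gammaS Q r)) := by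
    clear hrq2
    induction hq1r with
    | refl => exact ⟨hnd1, Or.inl hγ1.symm⟩
    | tail _ hcov IH =>
      obtain ⟨ih1, ih2⟩ := IH
      obtain ⟨j1, j2⟩ := stepMinus h ih1 hcov
      exact ⟨j1, lePlus_trans ih2 j2⟩
  obtain ⟨hposr, hδ⟩ := hrq2
  have hpos2 : 0 < q2.1 := by
    have := covMinus_dim ⟨hposr, hδ⟩; omega
  obtain ⟨cl1, -, -⟩ := h.dom_eq q2 hpos2 h2.2
  have hfin : inDelta P (h.f (gammaS Q r)) (h.f q2) := cl1 _ hδ hΨ.1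
  rw [h2.1] at hfin
  have hcovP : covPlus P (h.f (gammaS Q r)) (gammaS P p) := ⟨p, hfin, rfl⟩
  exact hP.strict _ (lePlus_trans_lt hΨ.2 (Relation.TransGen.single hcovP))

end Map
section Comp

variable {Q P : PHg}

/-- The key asymmetric lemma: two non-degenerating faces of the same fiber whose
codomains are strictly `<⁺`-comparable are equal or `⊥⁺`. -/
lemma comp_aux (hQ : IsOpetope Q) (hP : IsOpetope P) (h : IotaMap Q P)
    {p : P.FaceS} {K : ℕ} (hp : p.1 = K + 1)
    {q1 q2 : Q.FaceS} (h1 : h.f q1 = p ∧ (h.f q1).1 = q1.1)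
    (h2 : h.f q2 = p ∧ (h.f q2).1 = q2.1)
    (hlt : ltPlus Q (gammaS Q q1) (gammaS Q q2)) :
    q1 = q2 ∨ perpPlus Q q1 q2 := by
  have hd1 : q1.1 = K + 1 := by rw [← h1.2, h1.1]; exact hp
  have hd2 : q2.1 = K + 1 := by rw [← h2.2, h2.1]; exact hp
  have hpos1 : 0 < q1.1 := by omega
  have hpos2 : 0 < q2.1 := by omega
  have hpp : 0 < p.1 := by omega
  have hγpd : (gammaS P p).1 + 1 = p.1 := gammaS_dim hpp
  have hγ1 : h.f (gammaS Q q1) = gammaS P p := by rw [F_gamma h hpos1 h1.2, h1.1]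
  have hγ2 : h.f (gammaS Q q2) = gammaS P p := by rw [F_gamma h hpos2 h2.2, h2.1]
  have hγ1d : (gammaS Q q1).1 + 1 = q1.1 := gammaS_dim hpos1
  have hγ2d : (gammaS Q q2).1 + 1 = q2.1 := gammaS_dim hpos2
  have hndγ1 : (h.f (gammaS Q q1)).1 = (gammaS Q q1).1 := by rw [hγ1]; omega
  -- the auxiliary relation: one step of `⋖⁻` landing in a drop-one face over `γ p`
  set R : Q.FaceS → Q.FaceS → Prop :=
    fun a b => covMinus Q a b ∧ h.f b = gammaS P p ∧ (h.f b).1 + 1 = b.1 with hR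
  -- core step analysis
  have core : ∀ c c' : Q.FaceS, (h.f c).1 = c.1 → covPlus Q c c' →
      (h.f c = gammaS P p ∨ ltPlus P (gammaS P p) (h.f c)) →
      ∃ β', inDelta Q c β' ∧ gammaS Q β' = c' ∧ (h.f c').1 = c'.1 ∧
        ((h.f β' = gammaS P p ∧ (h.f β').1 + 1 = β'.1 ∧ h.f c = gammaS P p ∧
            h.f c' = gammaS P p)
          ∨ ltPlus P (gammaS P p) (h.f c')) := by
    intro c c' hcnd hcov hcase
    obtain ⟨β', hδ, hγ⟩ := hcov
    subst hγ
    have hdβ : c.1 + 1 = β'.1 := inDelta_dim hδ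
    have hdc' : (gammaS Q β').1 + 1 = β'.1 := gammaS_dim (by omega)
    have hble := h.dim_le β'
    rcases (by omega : (h.f β').1 = β'.1 ∨ (h.f β').1 + 1 = β'.1 ∨ (h.f β').1 + 2 ≤ β'.1)
      with heq | hdr1 | hdr2
    · obtain ⟨cl1, -, -⟩ := h.dom_eq β' (by omega) heq
      have hfc : inDelta P (h.f c) (h.f β') := cl1 c hδ hcnd
      have hfb : h.f (gammaS Q β') = gammaS P (h.f β') := F_gamma h (by omega) heq
      have hcovP : covPlus P (h.f c) (h.f (gammaS Q β')) := ⟨h.f β', hfc, hfb.symm⟩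
      have hdim : (h.f (gammaS Q β')).1 = (gammaS Q β').1 := by
        rw [hfb]
        have := gammaS_dim (q := h.f β') (by omega)
        omega
      refine ⟨β', hδ, rfl, hdim, Or.inr ?_⟩
      rcases hcase with hceq | hclt
      · rw [← hceq]; exact Relation.TransGen.single hcovP
      · exact hclt.tail hcovP
    · obtain ⟨cl1, -⟩ := h.dom_one β' hdr1
      have hfc : h.f c = h.f β' := cl1 c hδ hcnd
      have hfb : h.f (gammaS Q β') = h.f β' := F_gamma_drop1 h hdr1
      have hdim : (h.f (gammaS Q β')).1 = (gammaS Q β').1 := by rw [hfb]; omega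
      rcases hcase with hceq | hclt
      · exact ⟨β', hδ, rfl, hdim,
          Or.inl ⟨hfc.symm.trans hceq, by omega, hceq, hfb.trans (hfc.symm.trans hceq)⟩⟩
      · refine ⟨β', hδ, rfl, hdim, Or.inr ?_⟩
        rw [hfb, ← hfc]
        exact hclt
    · exact absurd (h.dom_more β' hdr2 c hδ) (by omega)
  -- main chain construction along the `<⁺`-chain from `γ q1`
  have key : ∀ c, ltPlus Q (gammaS Q q1) c →
      ((∃ β, Relation.TransGen R q1 β ∧ gammaS Q β = c ∧ h.f β = gammaS P p ∧
          (h.f β).1 + 1 = β.1)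
        ∨ ((h.f c).1 = c.1 ∧ ltPlus P (gammaS P p) (h.f c))) := by
    intro c hltc
    induction hltc with
    | single hcov =>
      obtain ⟨β', hδ, hγβ', hcnd', hres⟩ := core _ _ hndγ1 hcov (Or.inl hγ1)
      rcases hres with ⟨hfβ, hdβ, -, -⟩ | hstrict
      · exact Or.inl ⟨β', Relation.TransGen.single ⟨⟨hpos1, hδ⟩, hfβ, hdβ⟩, hγβ', hfβ, hdβ⟩
      · exact Or.inr ⟨hcnd', hstrict⟩
    | @tail b c hchain hcov IH =>
      rcases IH with ⟨β, hchainR, hγβ, hfβ, hdβ⟩ | ⟨hcnd, hstrict⟩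
      · subst hγβ
        have hposβ : 0 < β.1 := by omega
        have hfc : h.f (gammaS Q β) = gammaS P p := (F_gamma_drop1 h hdβ).trans hfβ
        have hγβd : (gammaS Q β).1 + 1 = β.1 := gammaS_dim hposβ
        have hcndc : (h.f (gammaS Q β)).1 = (gammaS Q β).1 := by
          rw [hfc]
          have : (h.f β).1 = (gammaS P p).1 := by rw [hfβ]
          omega
        obtain ⟨β', hδ, hγβ', hcnd', hres⟩ := core _ _ hcndc hcov (Or.inl hfc)
        rcases hres with ⟨hfβ', hdβ', -, -⟩ | hstrict
        · exact Or.inl ⟨β', hchainR.tail ⟨⟨hposβ, hδ⟩, hfβ', hdβ'⟩, hγβ', hfβ', hdβ'⟩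
        · exact Or.inr ⟨hcnd', hstrict⟩
      · obtain ⟨β', hδ, hγβ', hcnd', hres⟩ := core _ _ hcnd hcov (Or.inr hstrict)
        rcases hres with ⟨-, -, hfc, -⟩ | hstrict'
        · rw [hfc] at hstrict
          exact absurd hstrict (hP.strict _)
        · exact Or.inr ⟨hcnd', hstrict'⟩
  rcases key _ hlt with ⟨β, hchainR, hγβ, hfβ, hdβ⟩ | ⟨-, hstrict⟩
  · -- Step 2: compare β with q2 via the γ-pencil at γ q2
    have hposβ : 0 < β.1 := by omega
    have hβq2 : ltPlus Q β q2 := by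
      rcases hQ.pencil_gamma (gammaS Q q2) β q2 ⟨hposβ, hγβ⟩ ⟨hpos2, rfl⟩ with heq | hperp
      · exfalso
        subst heq
        have := h2.2
        omega
      · rcases hperp with hlt' | hgt'
        · exact hlt'
        · exfalso
          have := (lt_nondeg h hgt' h2.2).1
          omega
    -- Step 3: mix the `⋖⁻`-chain with `β <⁺ q2`
    have R_target : ∀ {β : Q.FaceS}, Relation.TransGen R q1 β →
        h.f β = gammaS P p ∧ (h.f β).1 + 1 = β.1 := by
      intro β hch
      induction hch with
      | single hr => exact ⟨hr.2.1, hr.2.2⟩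
      | tail _ hr _ => exact ⟨hr.2.1, hr.2.2⟩
    have mixDD : ∀ β, Relation.TransGen R q1 β → ltPlus Q β q2 →
        ltMinus Q q1 q2 ∨ q1 = q2 ∨ perpPlus Q q1 q2 := by
      intro β hch
      induction hch with
      | single hr =>
        intro hβ2
        rcases mix_star hQ hβ2 q1 hr.1 with hcm | hres
        · exact Or.inl (Relation.TransGen.single hcm)
        · exact Or.inr hres
      | @tail b c hch' hr IH =>
        intro hβ2
        rcases mix_star hQ hβ2 b hr.1 with hcm | heq | hperp
        · refine Or.inl ?_
          have : ltMinus Q q1 b := Relation.TransGen.mono (r := R) (p := covMinus Q) (fun _ _ hr => hr.1) q1 b hch'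
          exact this.tail hcm
        · exfalso
          obtain ⟨-, hdb⟩ := R_target hch'
          rw [heq] at hdb
          have := h2.2
          omega
        · rcases hperp with hlt' | hgt'
          · exact IH hlt'
          · exfalso
            obtain ⟨-, hdb⟩ := R_target hch'
            have := (lt_nondeg h hgt' h2.2).1
            omega
    rcases mixDD β hchainR hβq2 with hm | hres
    · exact absurd hm (fiber_no_ltMinus h hP h1 h2)
    · exact hres
  · rw [hγ2] at hstrict
    exact absurd hstrict (hP.strict _)

/-- Fiber comparability. -/
lemma comp_fiber (hQ : IsOpetope Q) (hP : IsOpetope P) (h : IotaMap Q P) :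
    ∀ (K : ℕ) (p : P.FaceS), p.1 = K →
    ∀ q1 q2 : Q.FaceS, (h.f q1 = p ∧ (h.f q1).1 = q1.1) →
      (h.f q2 = p ∧ (h.f q2).1 = q2.1) →
    q1 = q2 ∨ perpPlus Q q1 q2 := by
  intro K
  induction K with
  | zero =>
    intro p hp q1 q2 h1 h2
    refine hQ.linear0 q1 q2 ?_ ?_
    · rw [← h1.2, h1.1]; exact hp
    · rw [← h2.2, h2.1]; exact hp
  | succ K IH =>
    intro p hp q1 q2 h1 h2
    have hd1 : q1.1 = K + 1 := by rw [← h1.2, h1.1]; exact hp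
    have hd2 : q2.1 = K + 1 := by rw [← h2.2, h2.1]; exact hp
    have hpos1 : 0 < q1.1 := by omega
    have hpos2 : 0 < q2.1 := by omega
    have hpp : 0 < p.1 := by omega
    have hγpd : (gammaS P p).1 + 1 = p.1 := gammaS_dim hpp
    have hγ1 : h.f (gammaS Q q1) = gammaS P p := by rw [F_gamma h hpos1 h1.2, h1.1]
    have hγ2 : h.f (gammaS Q q2) = gammaS P p := by rw [F_gamma h hpos2 h2.2, h2.1]
    have hγ1d : (gammaS Q q1).1 + 1 = q1.1 := gammaS_dim hpos1
    have hγ2d : (gammaS Q q2).1 + 1 = q2.1 := gammaS_dim hpos2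
    have hm1 : h.f (gammaS Q q1) = gammaS P p ∧
        (h.f (gammaS Q q1)).1 = (gammaS Q q1).1 := ⟨hγ1, by rw [hγ1]; omega⟩
    have hm2 : h.f (gammaS Q q2) = gammaS P p ∧
        (h.f (gammaS Q q2)).1 = (gammaS Q q2).1 := ⟨hγ2, by rw [hγ2]; omega⟩
    rcases IH (gammaS P p) (by omega) (gammaS Q q1) (gammaS Q q2) hm1 hm2 with heq | hperp
    · exact hQ.pencil_gamma (gammaS Q q1) q1 q2 ⟨hpos1, rfl⟩ ⟨hpos2, heq.symm⟩
    · rcases hperp with hlt | hlt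
      · exact comp_aux hQ hP h hp h1 h2 hlt
      · rcases comp_aux hQ hP h hp h2 h1 hlt with heq | hperp'
        · exact Or.inl heq.symm
        · exact Or.inr (perpPlus_symm hperp')

end Comp
/-- The set of non-degenerating faces in the fiber of a contraction
morphism over a face `p ∈ P_k` is a `<⁺`-interval. -/
theorem iota_fiber_interval
    (Q P : PHg) (hQ : IsOpetope Q) (hP : IsOpetope P) (h : IotaMap Q P)
    (k : ℕ) (p : P.FaceS) (hp : p.1 = k) :
    IntervalPlus Q {q | h.f q = p ∧ (h.f q).1 = q.1} := by
  classical
  by_cases hne : ({q | h.f q = p ∧ (h.f q).1 = q.1} : Set Q.FaceS) = ∅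
  · exact Or.inl hne
  · right
    set X : Set Q.FaceS := {q | h.f q = p ∧ (h.f q).1 = q.1} with hX
    have hXne : X.Nonempty := Set.nonempty_iff_ne_empty.mpr hne
    have hfin : Finite Q.FaceS := faceS_finite Q
    have hcomp : ∀ a ∈ X, ∀ b ∈ X, a = b ∨ perpPlus Q a b := fun a ha b hb =>
      comp_fiber hQ hP h k p hp a b ha hb
    obtain ⟨x1, hx1X, hx1max⟩ := (wf_gtPlus hQ).has_min X hXne
    obtain ⟨x0, hx0X, hx0min⟩ := (wf_ltPlus hQ).has_min X hXne
    have top : ∀ a ∈ X, lePlus Q a x1 := by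
      intro a ha
      rcases hcomp a ha x1 hx1X with heq | hp1 | hp2
      · exact Or.inl heq
      · exact Or.inr hp1
      · exact absurd hp2 (hx1max a ha)
    have bot : ∀ a ∈ X, lePlus Q x0 a := by
      intro a ha
      rcases hcomp a ha x0 hx0X with heq | hp1 | hp2
      · exact Or.inl heq.symm
      · exact absurd hp1 (hx0min a ha)
      · exact Or.inr hp2
    refine ⟨x0, x1, top x0 hx0X, ?_⟩
    ext q
    simp only [Set.mem_setOf_eq]
    constructor
    · intro hq
      exact ⟨bot q hq, top q hq⟩
    · rintro ⟨hq0, hq1⟩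
      rcases hq0 with rfl | hq0
      · exact hx0X
      rcases hq1 with rfl | hq1
      · exact hx1X
      obtain ⟨hx0f, hx0d⟩ := hx0X
      obtain ⟨hx1f, hx1d⟩ := hx1X
      obtain ⟨j1, j2⟩ := lt_nondeg h hq0 hx0d
      obtain ⟨j3, j4⟩ := lt_nondeg h hq1 j1
      rw [hx0f] at j2
      rw [hx1f] at j4
      exact ⟨lePlus_antisymm hP j4 j2, j1⟩
end

section
/- Let P be a positive opetope of dimension n and x a face of P_k. The pencil order ≺_x on the pencil Pl_x = {a ∈ P_{k+1} : x ∈ ∂(a)} — defined by a ≺_x b iff (γ(b) = x ∈ δ(a)), or (x ∈ δ(a) ∩ δ(b) and a <^+ b), or (γ(a) = x = γ(b) and b <^+ a) — is a strict linear order on Pl_x. -/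
open scoped Classical

/-- A restricted flag from dimension `m` down to dimension `l`,
encoded as a function `ℕ → S.FaceS` (entries outside `[l,m]` are irrelevant). -/
def IsRFlag (S : PHg) (m l : ℕ) (F : ℕ → S.FaceS) : Prop :=
  (∀ i, l ≤ i → i ≤ m → (F i).1 = i) ∧
  (∀ i, l ≤ i → i < m → inBoundary S (F i) (F (i+1)))

/-- The pencil order `≺ₓ` on the pencil over `x`. -/
def pencilLt (S : PHg) (x a b : S.FaceS) : Prop :=
  (inGammaS S x b ∧ inDelta S x a) ∨
  (inDelta S x a ∧ inDelta S x b ∧ ltPlus S a b) ∨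
  (inGammaS S x a ∧ inGammaS S x b ∧ ltPlus S b a)

/-- The sign of the flag segment `[F j, …, F l]`. -/
noncomputable def sgnSeg (S : PHg) (l : ℕ) (F : ℕ → S.FaceS) : ℕ → ℤ
  | 0 => 1
  | j+1 => if l ≤ j ∧ inDelta S (F j) (F (j+1)) then -(sgnSeg S l F j) else sgnSeg S l F j

/-- The flag order `◁` on flags from dimension `m` down to `l`. -/
def flagLt (S : PHg) (l m : ℕ) (F G : ℕ → S.FaceS) : Prop :=
  ∃ k, l ≤ k ∧ k ≤ m ∧ (∀ i, l ≤ i → i < k → F i = G i) ∧ F k ≠ G k ∧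
    ((k = 0 ∧ ltPlus S (G 0) (F 0)) ∨
     (0 < k ∧ sgnSeg S l F (k-1) = 1 ∧ pencilLt S (F (k-1)) (F k) (G k)) ∨
     (0 < k ∧ sgnSeg S l F (k-1) = -1 ∧ pencilLt S (F (k-1)) (G k) (F k)))

/-- `i` is the low level `ll` of the flag `F` (with top dimension `n`). -/
def LowLevelT (S : PHg) (n : ℕ) (F : ℕ → S.FaceS) (i : ℕ) : Prop :=
  i + 2 ≤ n ∧ inDelta S (F (i+1)) (F (i+2)) ∧
    ∀ j, i < j → j + 2 ≤ n → ¬ inDelta S (F (j+1)) (F (j+2))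

/-- Membership in `Flags[t / b]`, flags from top face `t` (dim `m`) to bottom face `b` (dim `l`). -/
def MemFlags (S : PHg) (l m : ℕ) (t b : S.FaceS) (F : ℕ → S.FaceS) : Prop :=
  IsRFlag S m l F ∧ F m = t ∧ F l = b

def EqOnFl {α : Type*} (l m : ℕ) (F G : ℕ → α) : Prop :=
  ∀ i, l ≤ i → i ≤ m → F i = G i

/-- `G` is the successor of `F` in `Flags[t / b]` with respect to the flag order. -/
def SuccFl (S : PHg) (l m : ℕ) (t b : S.FaceS) (F G : ℕ → S.FaceS) : Prop :=
  MemFlags S l m t b F ∧ MemFlags S l m t b G ∧ flagLt S l m F G ∧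
  ∀ H, MemFlags S l m t b H → flagLt S l m F H → (EqOnFl l m G H ∨ flagLt S l m G H)

/-- The pencil order `≺ₓ` is a strict linear order on the pencil
`Pl_x = {a : x ∈ ∂(a)}` of a positive opetope. -/
theorem pencil_order_strict_linear
    (S : PHg) (hS : IsOpetope S) (x : S.FaceS) :
    (∀ a, inBoundary S x a → ¬ pencilLt S x a a) ∧
    (∀ a b c, inBoundary S x a → inBoundary S x b → inBoundary S x c →
      pencilLt S x a b → pencilLt S x b c → pencilLt S x a c) ∧
    (∀ a b, inBoundary S x a → inBoundary S x b →
      a = b ∨ pencilLt S x a b ∨ pencilLt S x b a) := by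
  have key : ∀ a, inGammaS S x a → inDelta S x a → False := fun a hG hD =>
    hS.strict x (Relation.TransGen.single ⟨a, hD, hG.2⟩)
  refine ⟨?_, ?_, ?_⟩
  · rintro a _ (⟨hG, hD⟩ | ⟨_, _, hlt⟩ | ⟨_, _, hlt⟩)
    · exact key a hG hD
    · exact hS.strict a hlt
    · exact hS.strict a hlt
  · rintro a b c _ _ _
      (⟨hGb, hDa⟩ | ⟨hDa, hDb, hab⟩ | ⟨hGa, hGb, hba⟩)
      (⟨hGc, hDb'⟩ | ⟨hDb', hDc, hbc⟩ | ⟨hGb', hGc, hcb⟩)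
    · exact (key b hGb hDb').elim
    · exact (key b hGb hDb').elim
    · exact Or.inl ⟨hGc, hDa⟩
    · exact Or.inl ⟨hGc, hDa⟩
    · exact Or.inr (Or.inl ⟨hDa, hDc, hab.trans hbc⟩)
    · exact (key b hGb' hDb).elim
    · exact (key b hGb hDb').elim
    · exact (key b hGb hDb').elim
    · exact Or.inr (Or.inr ⟨hGa, hGc, hcb.trans hba⟩)
  · rintro a b (hGa | hDa) (hGb | hDb)
    · rcases hS.pencil_gamma x a b hGa hGb with h | h | h
      · exact Or.inl h
      · exact Or.inr (Or.inr (Or.inr (Or.inr ⟨hGb, hGa, h⟩)))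
      · exact Or.inr (Or.inl (Or.inr (Or.inr ⟨hGa, hGb, h⟩)))
    · exact Or.inr (Or.inr (Or.inl ⟨hGa, hDb⟩))
    · exact Or.inr (Or.inl (Or.inl ⟨hGb, hDa⟩))
    · rcases hS.pencil_delta x a b hDa hDb with h | h | h
      · exact Or.inl h
      · exact Or.inr (Or.inl (Or.inr (Or.inl ⟨hDa, hDb, h⟩)))
      · exact Or.inr (Or.inr (Or.inr (Or.inl ⟨hDb, hDa, h⟩)))
end

section
/- Let P be a positive opetope. The flag order ◁ on the set Flags_P[x_m / 0) of flags under x_m (defined by comparing two distinct flags at the minimal level k where they differ: if k = 0 then x ◁ y iff y_0 <^+ x_0; if k > 0 and sgn([x_{k−1},…,x_0]) = +1 then x ◁ y iff x_k ≺_{x_{k−1}} y_k; if k > 0 and sgn([x_{k−1},…,x_0]) = −1 then x ◁ y iff y_k ≺_{x_{k−1}} x_k) is a strict linear order. -/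
open scoped Classical

section Aux

variable {S : PHg}

lemma aux_not_gamma_delta (hS : IsOpetope S) {x a : S.FaceS}
    (h1 : inGammaS S x a) (h2 : inDelta S x a) : False :=
  hS.strict x (Relation.TransGen.single ⟨a, h2, h1.2⟩)

lemma aux_pencil_irrefl (hS : IsOpetope S) {x a : S.FaceS} :
    ¬ pencilLt S x a a := by
  rintro (⟨h1, h2⟩ | ⟨_, _, h⟩ | ⟨_, _, h⟩)
  · exact aux_not_gamma_delta hS h1 h2
  · exact hS.strict a h
  · exact hS.strict a h

lemma aux_pencil_trans (hS : IsOpetope S) {x a b c : S.FaceS}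
    (hab : pencilLt S x a b) (hbc : pencilLt S x b c) : pencilLt S x a c := by
  rcases hab with ⟨hgb, hda⟩ | ⟨hda, hdb, hl⟩ | ⟨hga, hgb, hl⟩ <;>
    rcases hbc with ⟨hgc, hdb'⟩ | ⟨hdb', hdc, hl'⟩ | ⟨hgb', hgc, hl'⟩
  · exact absurd hdb' (fun h => aux_not_gamma_delta hS hgb h)
  · exact absurd hdb' (fun h => aux_not_gamma_delta hS hgb h)
  · exact Or.inl ⟨hgc, hda⟩
  · exact Or.inl ⟨hgc, hda⟩
  · exact Or.inr (Or.inl ⟨hda, hdc, hl.trans hl'⟩)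
  · exact absurd hdb (fun h => aux_not_gamma_delta hS hgb' h)
  · exact absurd hdb' (fun h => aux_not_gamma_delta hS hgb h)
  · exact absurd hdb' (fun h => aux_not_gamma_delta hS hgb h)
  · exact Or.inr (Or.inr ⟨hga, hgc, hl'.trans hl⟩)

lemma aux_pencil_total (hS : IsOpetope S) {x a b : S.FaceS}
    (ha : inBoundary S x a) (hb : inBoundary S x b) :
    a = b ∨ pencilLt S x a b ∨ pencilLt S x b a := by
  rcases ha with ha | ha <;> rcases hb with hb | hb
  · rcases hS.pencil_gamma x a b ha hb with h | h | h
    · exact Or.inl h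
    · exact Or.inr (Or.inr (Or.inr (Or.inr ⟨hb, ha, h⟩)))
    · exact Or.inr (Or.inl (Or.inr (Or.inr ⟨ha, hb, h⟩)))
  · exact Or.inr (Or.inr (Or.inl ⟨ha, hb⟩))
  · exact Or.inr (Or.inl (Or.inl ⟨hb, ha⟩))
  · rcases hS.pencil_delta x a b ha hb with h | h | h
    · exact Or.inl h
    · exact Or.inr (Or.inl (Or.inr (Or.inl ⟨ha, hb, h⟩)))
    · exact Or.inr (Or.inr (Or.inr (Or.inl ⟨hb, ha, h⟩)))

lemma aux_sgn_pm (S : PHg) (l : ℕ) (F : ℕ → S.FaceS) :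
    ∀ j, sgnSeg S l F j = 1 ∨ sgnSeg S l F j = -1
  | 0 => Or.inl rfl
  | j+1 => by
    rcases aux_sgn_pm S l F j with h | h <;>
      · simp only [sgnSeg, h]
        split <;> simp

lemma aux_sgn_congr (S : PHg) (l : ℕ) (F G : ℕ → S.FaceS) :
    ∀ j, (∀ i, i ≤ j → F i = G i) → sgnSeg S l F j = sgnSeg S l G j
  | 0, _ => rfl
  | j+1, h => by
    have h1 : F j = G j := h j (by omega)
    have h2 : F (j+1) = G (j+1) := h (j+1) le_rfl
    have ih := aux_sgn_congr S l F G j (fun i hi => h i (by omega))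
    simp only [sgnSeg, h1, h2, ih]

end Aux

/-- The flag order `◁` is a strict linear order on the set
`Flags_P[x_m / 0)` of flags under a face `x_m` of a positive opetope. -/
theorem flag_order_strict_linear
    (S : PHg) (hS : IsOpetope S) (m : ℕ) (t : S.FaceS) (ht : t.1 = m) :
    (∀ F, IsRFlag S m 0 F → F m = t → ¬ flagLt S 0 m F F) ∧
    (∀ F G H, IsRFlag S m 0 F → F m = t → IsRFlag S m 0 G → G m = t →
      IsRFlag S m 0 H → H m = t →
      flagLt S 0 m F G → flagLt S 0 m G H → flagLt S 0 m F H) ∧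
    (∀ F G, IsRFlag S m 0 F → F m = t → IsRFlag S m 0 G → G m = t →
      EqOnFl 0 m F G ∨ flagLt S 0 m F G ∨ flagLt S 0 m G F) := by
  refine ⟨?_, ?_, ?_⟩
  · rintro F _ _ ⟨k, _, _, _, hne, _⟩
    exact hne rfl
  · rintro F G H hF hFt hG hGt hH hHt
      ⟨k₁, -, hk₁m, hag₁, hne₁, hc₁⟩ ⟨k₂, -, hk₂m, hag₂, hne₂, hc₂⟩
    rcases lt_trichotomy k₁ k₂ with hlt | heq | hgt
    · -- k₁ < k₂
      have hGH : G k₁ = H k₁ := hag₂ k₁ (Nat.zero_le _) hlt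
      refine ⟨k₁, Nat.zero_le _, hk₁m,
        fun i _ hi => (hag₁ i (Nat.zero_le _) hi).trans
          (hag₂ i (Nat.zero_le _) (hi.trans hlt)),
        by rw [← hGH]; exact hne₁, ?_⟩
      rcases hc₁ with ⟨hk0, hl⟩ | ⟨hkp, hs, hp⟩ | ⟨hkp, hs, hp⟩
      · subst hk0
        exact Or.inl ⟨rfl, by rw [← hGH]; exact hl⟩
      · exact Or.inr (Or.inl ⟨hkp, hs, by rw [← hGH]; exact hp⟩)
      · exact Or.inr (Or.inr ⟨hkp, hs, by rw [← hGH]; exact hp⟩)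
    · -- k₁ = k₂
      subst heq
      have hagFH : ∀ i, 0 ≤ i → i < k₁ → F i = H i :=
        fun i _ hi => (hag₁ i (Nat.zero_le _) hi).trans (hag₂ i (Nat.zero_le _) hi)
      rcases hc₁ with ⟨hk0, hl₁⟩ | ⟨hkp₁, hs₁, hp₁⟩ | ⟨hkp₁, hs₁, hp₁⟩ <;>
        rcases hc₂ with ⟨hk0', hl₂⟩ | ⟨hkp₂, hs₂, hp₂⟩ | ⟨hkp₂, hs₂, hp₂⟩
      · subst hk0
        have htr : ltPlus S (H 0) (F 0) := hl₂.trans hl₁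
        have hne : F 0 ≠ H 0 := by
          intro h; rw [h] at htr; exact hS.strict _ htr
        exact ⟨0, le_rfl, hk₁m, hagFH, hne, Or.inl ⟨rfl, htr⟩⟩
      · omega
      · omega
      · omega
      · have hx : G (k₁-1) = F (k₁-1) := (hag₁ _ (Nat.zero_le _) (by omega)).symm
        rw [hx] at hp₂
        have hp := aux_pencil_trans hS hp₁ hp₂
        have hne : F k₁ ≠ H k₁ := by
          intro h; rw [h] at hp; exact aux_pencil_irrefl hS hp
        exact ⟨k₁, Nat.zero_le _, hk₁m, hagFH, hne, Or.inr (Or.inl ⟨hkp₁, hs₁, hp⟩)⟩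
      · have hsgn : sgnSeg S 0 F (k₁-1) = sgnSeg S 0 G (k₁-1) :=
          aux_sgn_congr S 0 F G (k₁-1)
            (fun i hi => hag₁ i (Nat.zero_le _) (by omega))
        rw [← hsgn] at hs₂; rw [hs₁] at hs₂; exact absurd hs₂ (by norm_num)
      · omega
      · have hsgn : sgnSeg S 0 F (k₁-1) = sgnSeg S 0 G (k₁-1) :=
          aux_sgn_congr S 0 F G (k₁-1)
            (fun i hi => hag₁ i (Nat.zero_le _) (by omega))
        rw [← hsgn] at hs₂; rw [hs₁] at hs₂; exact absurd hs₂ (by norm_num)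
      · have hx : G (k₁-1) = F (k₁-1) := (hag₁ _ (Nat.zero_le _) (by omega)).symm
        rw [hx] at hp₂
        have hp := aux_pencil_trans hS hp₂ hp₁
        have hne : F k₁ ≠ H k₁ := by
          intro h; rw [h] at hp; exact aux_pencil_irrefl hS hp
        exact ⟨k₁, Nat.zero_le _, hk₁m, hagFH, hne, Or.inr (Or.inr ⟨hkp₁, hs₁, hp⟩)⟩
    · -- k₂ < k₁
      have hFG : F k₂ = G k₂ := hag₁ k₂ (Nat.zero_le _) hgt
      have hsgn : sgnSeg S 0 F (k₂-1) = sgnSeg S 0 G (k₂-1) :=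
        aux_sgn_congr S 0 F G (k₂-1)
          (fun i hi => hag₁ i (Nat.zero_le _) (by omega))
      refine ⟨k₂, Nat.zero_le _, hk₂m,
        fun i _ hi => (hag₁ i (Nat.zero_le _) (hi.trans hgt)).trans
          (hag₂ i (Nat.zero_le _) hi),
        by rw [hFG]; exact hne₂, ?_⟩
      rcases hc₂ with ⟨hk0, hl⟩ | ⟨hkp, hs, hp⟩ | ⟨hkp, hs, hp⟩
      · subst hk0
        exact Or.inl ⟨rfl, by rw [hFG]; exact hl⟩
      · have hx : G (k₂-1) = F (k₂-1) := (hag₁ _ (Nat.zero_le _) (by omega)).symm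
        rw [hx, ← hFG] at hp
        exact Or.inr (Or.inl ⟨hkp, by rw [hsgn]; exact hs, hp⟩)
      · have hx : G (k₂-1) = F (k₂-1) := (hag₁ _ (Nat.zero_le _) (by omega)).symm
        rw [hx, ← hFG] at hp
        exact Or.inr (Or.inr ⟨hkp, by rw [hsgn]; exact hs, hp⟩)
  · intro F G hF hFt hG hGt
    by_cases heq : EqOnFl 0 m F G
    · exact Or.inl heq
    right
    have hex : ∃ i, F i ≠ G i := by
      by_contra h
      push_neg at h
      exact heq (fun i _ _ => h i)
    obtain ⟨i₀, -, hi₀m, hne₀⟩ : ∃ i, 0 ≤ i ∧ i ≤ m ∧ F i ≠ G i := by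
      by_contra h
      push_neg at h
      exact heq (fun i h0 hm => h i h0 hm)
    have hk : F (Nat.find hex) ≠ G (Nat.find hex) := Nat.find_spec hex
    have hag : ∀ i, i < Nat.find hex → F i = G i :=
      fun i hi => not_not.mp (Nat.find_min hex hi)
    have hkm : Nat.find hex ≤ m := le_trans (Nat.find_min' hex hne₀) hi₀m
    rcases Nat.eq_zero_or_pos (Nat.find hex) with hk0 | hkpos
    · rw [hk0] at hk hkm
      have hdF : (F 0).1 = 0 := hF.1 0 le_rfl (Nat.zero_le m)
      have hdG : (G 0).1 = 0 := hG.1 0 le_rfl (Nat.zero_le m)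
      rcases hS.linear0 (F 0) (G 0) hdF hdG with h | h | h
      · exact absurd h hk
      · exact Or.inr ⟨0, le_rfl, Nat.zero_le m,
          fun i _ hi => absurd hi (Nat.not_lt_zero i), hk.symm, Or.inl ⟨rfl, h⟩⟩
      · exact Or.inl ⟨0, le_rfl, Nat.zero_le m,
          fun i _ hi => absurd hi (Nat.not_lt_zero i), hk, Or.inl ⟨rfl, h⟩⟩
    · obtain ⟨j, hjk⟩ : ∃ j, Nat.find hex = j + 1 := ⟨Nat.find hex - 1, by omega⟩
      rw [hjk] at hk hag hkm
      have hx : G j = F j := (hag j (by omega)).symm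
      have hbF : inBoundary S (F j) (F (j+1)) := hF.2 j (Nat.zero_le j) (by omega)
      have hbG : inBoundary S (F j) (G (j+1)) := by
        have := hG.2 j (Nat.zero_le j) (by omega)
        rwa [hx] at this
      have hsG : sgnSeg S 0 G j = sgnSeg S 0 F j :=
        (aux_sgn_congr S 0 F G j (fun i hi => hag i (by omega))).symm
      have hred : j + 1 - 1 = j := rfl
      rcases aux_pencil_total hS hbF hbG with h | h | h
      · exact absurd h hk
      · rcases aux_sgn_pm S 0 F j with hs | hs
        · exact Or.inl ⟨j+1, Nat.zero_le _, hkm, fun i _ hi => hag i hi, hk,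
            Or.inr (Or.inl ⟨Nat.succ_pos j, by rw [hred]; exact hs,
              by rw [hred]; exact h⟩)⟩
        · exact Or.inr ⟨j+1, Nat.zero_le _, hkm, fun i _ hi => (hag i hi).symm,
            hk.symm, Or.inr (Or.inr ⟨Nat.succ_pos j,
              by rw [hred, hsG]; exact hs,
              by rw [hred, hx]; exact h⟩)⟩
      · rcases aux_sgn_pm S 0 F j with hs | hs
        · exact Or.inr ⟨j+1, Nat.zero_le _, hkm, fun i _ hi => (hag i hi).symm,
            hk.symm, Or.inr (Or.inl ⟨Nat.succ_pos j,
              by rw [hred, hsG]; exact hs,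
              by rw [hred, hx]; exact h⟩)⟩
        · exact Or.inl ⟨j+1, Nat.zero_le _, hkm, fun i _ hi => hag i hi, hk,
            Or.inr (Or.inr ⟨Nat.succ_pos j, by rw [hred]; exact hs,
              by rw [hred]; exact h⟩)⟩
end
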